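/- Let p be a prime, t ≥ 1 an integer, and q = p^t. For m ∈ ℤ/qℤ define the Ramanujan sum c_q(m) = ∑_{a ∈ (ℤ/qℤ)ˣ} exp(2πi·ā·m̄/q), where ā, m̄ ∈ {0,…,q−1} are the integer representatives, and for n ∈ ℤ define C_q(n) = |SL₂(ℤ/qℤ)|⁻¹ · ∑_{ω ∈ SL₂(ℤ/qℤ)} c_q(ω₂₂ − n), where ω₂₂ is the bottom-right entry of ω. Then: (i) if t = 1 and p divides n, C_q(n) = −1/(p+1); (ii) if t = 1 and p does not divide n, C_q(n) = 1/(p²−1); (iii) if t ≥ 2, C_q(n) = 0. -/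

import Mathlib

open scoped BigOperators

/-- The Ramanujan sum `c_q(m) = ∑_{a ∈ (ℤ/qℤ)ˣ} exp(2πi·ā·m̄/q)`, where `ā, m̄`
are the integer representatives in `{0,…,q−1}`. -/
noncomputable def ramanujanSum (q : ℕ) (m : ZMod q) : ℂ :=
  ∑ᶠ a : (ZMod q)ˣ,
    Complex.exp (2 * Real.pi * Complex.I *
      ((((a : ZMod q).val : ℂ) * ((m.val : ℕ) : ℂ)) / (q : ℂ)))

/-- The average `C_q(n) = |SL₂(ℤ/qℤ)|⁻¹ ∑_{ω ∈ SL₂(ℤ/qℤ)} c_q(ω₂₂ − n)`. -/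
noncomputable def ramanujanAvg (q : ℕ) (n : ℤ) : ℂ :=
  (Nat.card (Matrix.SpecialLinearGroup (Fin 2) (ZMod q)) : ℂ)⁻¹ *
    ∑ᶠ ω : Matrix.SpecialLinearGroup (Fin 2) (ZMod q),
      ramanujanSum q (((ω : Matrix (Fin 2) (Fin 2) (ZMod q)) 1 1) - (n : ZMod q))

namespace RamanujanAux

open Finset
open scoped Classical

noncomputable abbrev E (q : ℕ) (x : ZMod q) : ℂ :=
  Complex.exp (2 * Real.pi * Complex.I * ((x.val : ℂ) / (q : ℂ)))

abbrev SL (q : ℕ) := Matrix.SpecialLinearGroup (Fin 2) (ZMod q)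

lemma E_natCast (q : ℕ) [NeZero q] (k : ℕ) :
    E q (k : ZMod q) = Complex.exp (2 * Real.pi * Complex.I * ((k : ℂ) / (q : ℂ))) := by
  have hq : (q:ℂ) ≠ 0 := Nat.cast_ne_zero.2 (NeZero.ne q)
  have h : k % q + q * (k / q) = k := Nat.mod_add_div k q
  have hval : ((k : ZMod q)).val = k % q := ZMod.val_natCast q k
  rw [E, hval]
  conv_rhs => rw [← h]
  push_cast
  rw [add_div, mul_add, Complex.exp_add]
  have h2 : (↑q * ↑(k / q) / ↑q : ℂ) = ((k/q : ℕ) : ℂ) := by field_simp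
  rw [h2, mul_comm (2 * ↑Real.pi * Complex.I) ((k/q : ℕ) : ℂ)]
  rw [show ((k/q:ℕ):ℂ) = (((k/q:ℕ):ℤ):ℂ) from (Int.cast_natCast _).symm]
  rw [Complex.exp_int_mul_two_pi_mul_I, mul_one]

lemma E_add (q : ℕ) [NeZero q] (x y : ZMod q) : E q (x + y) = E q x * E q y := by
  have hxy : x + y = ((x.val + y.val : ℕ) : ZMod q) := by
    push_cast [ZMod.natCast_val, ZMod.cast_id]
    rfl
  rw [hxy, E_natCast, E, E, ← Complex.exp_add]
  congr 1
  push_cast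
  ring

lemma E_zero (q : ℕ) [NeZero q] : E q 0 = 1 := by
  rw [E, ZMod.val_zero]
  simp

lemma ramanujanSum_eq (q : ℕ) [NeZero q] (m : ZMod q) :
    ramanujanSum q m = ∑ a : (ZMod q)ˣ, E q ((a : ZMod q) * m) := by
  rw [ramanujanSum, finsum_eq_sum_of_fintype]
  refine Finset.sum_congr rfl fun a _ => ?_
  rw [show ((a : ZMod q) * m) = (((a : ZMod q).val * m.val : ℕ) : ZMod q) by
    push_cast [ZMod.natCast_val, ZMod.cast_id]; ring]
  rw [E_natCast]
  push_cast
  ring_nf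

lemma geom (N : ℕ) (hN : 2 ≤ N) :
    ∑ j ∈ range N, Complex.exp (2 * Real.pi * Complex.I * ((j : ℂ) / (N : ℂ))) = 0 := by
  have hN0 : (N:ℂ) ≠ 0 := Nat.cast_ne_zero.2 (by omega)
  set z : ℂ := Complex.exp (2 * Real.pi * Complex.I / N) with hz
  have hpow : ∀ j : ℕ, Complex.exp (2 * Real.pi * Complex.I * ((j : ℂ) / (N : ℂ))) = z ^ j := by
    intro j
    rw [hz, ← Complex.exp_nat_mul]
    ring_nf
  have hzN : z ^ N = 1 := by
    rw [hz, ← Complex.exp_nat_mul]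
    rw [show (N:ℂ) * (2 * Real.pi * Complex.I / N) = (1:ℤ) * (2 * Real.pi * Complex.I) by
      field_simp
      norm_num]
    exact Complex.exp_int_mul_two_pi_mul_I 1
  have hz1 : z ≠ 1 := by
    rw [hz, Ne, Complex.exp_eq_one_iff]
    rintro ⟨k, hk⟩
    have hne : (2*(Real.pi:ℂ)*Complex.I : ℂ) ≠ 0 := by
      simp [Real.pi_ne_zero, Complex.I_ne_zero]
    have h1N : (1 : ℂ) / N = (k : ℂ) := by
      apply mul_left_cancel₀ hne
      rw [mul_one_div, hk]; ring
    have h2 : (1 : ℂ) = (k : ℂ) * N := by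
      field_simp at h1N; linear_combination h1N
    have hk' : (1 : ℤ) = k * N := by exact_mod_cast h2
    have hdvd : (N:ℤ) ∣ 1 := Dvd.intro_left k hk'.symm
    have := Int.le_of_dvd one_pos hdvd
    omega
  simp only [hpow]
  rw [geom_sum_eq hz1, hzN]
  simp

lemma sum_E_all (q : ℕ) [NeZero q] (hq : 2 ≤ q) : ∑ x : ZMod q, E q x = 0 := by
  rw [← geom q hq]
  apply Finset.sum_nbij' (fun x : ZMod q => x.val) (fun j : ℕ => (j : ZMod q))
  · intro a _; exact mem_range.2 (ZMod.val_lt a)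
  · intro a _; exact mem_univ _
  · intro a _; simp [ZMod.natCast_val, ZMod.cast_id]
  · intro a ha; exact ZMod.val_cast_of_lt (mem_range.1 ha)
  · intro a _; rfl

lemma unit_iff (p t : ℕ) (hp : p.Prime) (ht : 1 ≤ t) [NeZero (p^t)] (x : ZMod (p^t)) :
    IsUnit x ↔ ¬ p ∣ x.val := by
  conv_lhs => rw [show x = ((x.val : ℕ) : ZMod (p^t)) by simp [ZMod.natCast_val, ZMod.cast_id]]
  rw [ZMod.isUnit_iff_coprime, Nat.coprime_pow_right_iff ht, hp.coprime_iff_not_dvd.symm]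
  exact (Nat.coprime_comm.trans Iff.rfl)

lemma sum_E_nonunit (p t : ℕ) (hp : p.Prime) (ht : 1 ≤ t) [NeZero (p^t)] :
    ∑ x ∈ filter (fun x : ZMod (p^t) => ¬ IsUnit x) univ, E (p^t) x
      = ∑ j ∈ range (p^(t-1)),
          Complex.exp (2 * Real.pi * Complex.I * ((j : ℂ) / ((p^(t-1) : ℕ) : ℂ))) := by
  have hp2 := hp.two_le
  have hsplit : p * p^(t-1) = p^t := by
    rw [← pow_succ']; congr 1; omega
  apply Finset.sum_nbij' (fun x : ZMod (p^t) => x.val / p) (fun j : ℕ => ((p * j : ℕ) : ZMod (p^t)))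
  · intro a ha
    simp only [mem_filter, mem_univ, true_and, unit_iff p t hp ht, not_not] at ha
    refine mem_range.2 (Nat.div_lt_of_lt_mul ?_)
    rw [hsplit]; exact ZMod.val_lt a
  · intro j hj
    have hj := mem_range.1 hj
    have hlt : p * j < p ^ t := by
      rw [← hsplit]; exact mul_lt_mul_of_pos_left hj (by omega)
    simp only [mem_filter, mem_univ, true_and, unit_iff p t hp ht, not_not]
    rw [ZMod.val_cast_of_lt hlt]
    exact Dvd.intro j rfl
  · intro a ha
    simp only [mem_filter, mem_univ, true_and, unit_iff p t hp ht, not_not] at ha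
    rw [Nat.mul_div_cancel' ha]
    simp [ZMod.natCast_val, ZMod.cast_id]
  · intro j hj
    have hj := mem_range.1 hj
    have hlt : p * j < p ^ t := by
      rw [← hsplit]; exact mul_lt_mul_of_pos_left hj (by omega)
    rw [ZMod.val_cast_of_lt hlt, Nat.mul_div_cancel_left _ (by omega)]
  · intro a ha
    simp only [mem_filter, mem_univ, true_and, unit_iff p t hp ht, not_not] at ha
    rw [E]
    have hc : ((p^t : ℕ) : ℂ) = (p:ℂ) * ((p^(t-1):ℕ):ℂ) := by
      rw [← Nat.cast_mul, hsplit]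
    have hv : (a.val : ℂ) = (p:ℂ) * ((a.val / p : ℕ) : ℂ) := by
      rw [← Nat.cast_mul, Nat.mul_div_cancel' ha]
    rw [hv, hc]
    have hp0 : (p:ℂ) ≠ 0 := Nat.cast_ne_zero.2 (by omega)
    rw [mul_div_mul_left _ _ hp0]

lemma sum_units_coe {M : Type*} [AddCommMonoid M] (q : ℕ) [NeZero q] (f : ZMod q → M) :
    ∑ a : (ZMod q)ˣ, f ↑a = ∑ x ∈ filter (fun x : ZMod q => IsUnit x) univ, f x := by
  apply Finset.sum_nbij' (fun a : (ZMod q)ˣ => (a : ZMod q))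
    (fun x : ZMod q => if h : IsUnit x then h.unit else 1)
  · intro a _
    simp [a.isUnit]
  · intro x _; exact mem_univ _
  · intro a _
    rw [dif_pos a.isUnit]
    exact Units.ext a.isUnit.unit_spec
  · intro x hx
    simp only [mem_filter, mem_univ, true_and] at hx
    rw [dif_pos hx]
    exact hx.unit_spec
  · intro a _; rfl

lemma card_units_eq_filter (q : ℕ) [NeZero q] :
    Fintype.card (ZMod q)ˣ = (filter (fun x : ZMod q => IsUnit x) univ).card := by
  have := sum_units_coe (M := ℕ) q (fun _ => 1)
  simpa using this

lemma card_fiber_eq (q : ℕ) [NeZero q] (d : ZMod q) :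
    Fintype.card {ω : SL q // (ω : Matrix (Fin 2) (Fin 2) (ZMod q)) 1 1 = d}
      = Fintype.card {v : ZMod q × ZMod q × ZMod q // v.1 * d - v.2.1 * v.2.2 = 1} := by
  refine (Fintype.card_of_bijective (f := fun v =>
    (⟨⟨!![v.1.1, v.1.2.1; v.1.2.2, d], by
        rw [Matrix.det_fin_two]; simpa using v.2⟩, by simp⟩ :
      {ω : SL q // (ω : Matrix (Fin 2) (Fin 2) (ZMod q)) 1 1 = d})) ?_).symm
  constructor
  · rintro ⟨⟨a, b, c⟩, hv⟩ ⟨⟨a', b', c'⟩, hv'⟩ h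
    have h' := congrArg (fun ω : {ω : SL q // (ω : Matrix (Fin 2) (Fin 2) (ZMod q)) 1 1 = d} =>
      ((ω : SL q) : Matrix (Fin 2) (Fin 2) (ZMod q))) h
    simp only [] at h'
    rw [← Matrix.ext_iff] at h'
    have h00 := h' 0 0
    have h01 := h' 0 1
    have h10 := h' 1 0
    simp at h00 h01 h10
    apply Subtype.ext
    simp_all [Prod.ext_iff]
  · rintro ⟨⟨M, hM⟩, hd⟩
    refine ⟨⟨(M 0 0, M 0 1, M 1 0), ?_⟩, ?_⟩
    · rw [Matrix.det_fin_two] at hM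
      rw [← hd]; exact hM
    · apply Subtype.ext
      apply Subtype.ext
      show !![M 0 0, M 0 1; M 1 0, d] = M
      rw [← hd]
      exact (Matrix.eta_fin_two M).symm

noncomputable def unitEquiv (q : ℕ) [NeZero q] (u : (ZMod q)ˣ) :
    {v : ZMod q × ZMod q × ZMod q // v.1 * (u : ZMod q) - v.2.1 * v.2.2 = 1}
      ≃ ZMod q × ZMod q where
  toFun v := (v.1.2.1, v.1.2.2)
  invFun bc := ⟨((1 + bc.1 * bc.2) * ↑u⁻¹, bc.1, bc.2), by
    have h1 : (↑u⁻¹ : ZMod q) * ↑u = 1 := u.inv_mul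
    calc (1 + bc.1 * bc.2) * ↑u⁻¹ * ↑u - bc.1 * bc.2
        = (1 + bc.1 * bc.2) * ((↑u⁻¹ : ZMod q) * ↑u) - bc.1 * bc.2 := by ring
      _ = 1 := by rw [h1]; ring⟩
  left_inv v := by
    obtain ⟨⟨a, b, c⟩, hv⟩ := v
    apply Subtype.ext
    have h2 : 1 + b * c = a * ↑u := by linear_combination -hv
    show ((1 + b * c) * ↑u⁻¹, b, c) = (a, b, c)
    rw [h2, mul_assoc, u.mul_inv, mul_one]
  right_inv bc := rfl

lemma card_unit_fiber (q : ℕ) [NeZero q] (u : (ZMod q)ˣ) :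
    Fintype.card {v : ZMod q × ZMod q × ZMod q // v.1 * (↑u : ZMod q) - v.2.1 * v.2.2 = 1}
      = q^2 := by
  rw [Fintype.card_congr (unitEquiv q u)]
  simp [ZMod.card]
  ring

lemma card_nonunit_fiber (q : ℕ) [NeZero q] (d : ZMod q)
    (hd : ∀ a : ZMod q, IsUnit (a * d - 1)) :
    Fintype.card {v : ZMod q × ZMod q × ZMod q // v.1 * d - v.2.1 * v.2.2 = 1}
      = q * Fintype.card (ZMod q)ˣ := by
  have hbij : Function.Bijective (fun au : ZMod q × (ZMod q)ˣ =>
      (⟨(au.1, ↑au.2, ↑au.2⁻¹ * (au.1 * d - 1)), by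
        have h1 : (↑au.2 : ZMod q) * (↑au.2⁻¹ * (au.1 * d - 1)) = au.1 * d - 1 := by
          rw [← mul_assoc, au.2.mul_inv, one_mul]
        calc au.1 * d - ↑au.2 * (↑au.2⁻¹ * (au.1 * d - 1))
            = au.1 * d - (au.1 * d - 1) := by rw [h1]
          _ = 1 := by ring⟩ :
        {v : ZMod q × ZMod q × ZMod q // v.1 * d - v.2.1 * v.2.2 = 1})) := by
    constructor
    · rintro ⟨a, u⟩ ⟨a', u'⟩ h
      simp only [Subtype.mk.injEq, Prod.mk.injEq] at h
      obtain ⟨ha, hb, -⟩ := h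
      exact Prod.ext ha (Units.ext hb)
    · rintro ⟨⟨a, b, c⟩, hv⟩
      have hbc : b * c = a * d - 1 := by linear_combination -hv
      have hu : IsUnit b := isUnit_of_mul_isUnit_left (hbc ▸ hd a)
      obtain ⟨w, hw⟩ := hu
      refine ⟨(a, w), ?_⟩
      apply Subtype.ext
      show (a, (↑w : ZMod q), ↑w⁻¹ * (a * d - 1)) = (a, b, c)
      have hc : (↑w⁻¹ : ZMod q) * (a * d - 1) = c := by
        rw [← hbc, ← hw, ← mul_assoc, w.inv_mul, one_mul]
      rw [hw, hc]
  calc Fintype.card {v : ZMod q × ZMod q × ZMod q // v.1 * d - v.2.1 * v.2.2 = 1}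
      = Fintype.card (ZMod q × (ZMod q)ˣ) := (Fintype.card_of_bijective hbij).symm
    _ = q * Fintype.card (ZMod q)ˣ := by simp [ZMod.card]

lemma nonunit_shift (p t : ℕ) (hp : p.Prime) (ht : 1 ≤ t) [NeZero (p^t)]
    (d : ZMod (p^t)) (hd : ¬ IsUnit d) (a : ZMod (p^t)) : IsUnit (a * d - 1) := by
  haveI : Fact (1 < p) := ⟨hp.one_lt⟩
  set φ := ZMod.castHom (dvd_pow_self p (show t ≠ 0 by omega)) (ZMod p) with hφ
  have key : ∀ x : ZMod (p^t), (p ∣ x.val) ↔ φ x = 0 := by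
    intro x
    rw [hφ, ZMod.castHom_apply, ← ZMod.natCast_val, ZMod.natCast_eq_zero_iff]
  have hd0 : φ d = 0 := (key d).1 (by
    by_contra h
    exact hd ((unit_iff p t hp ht d).2 h))
  rw [unit_iff p t hp ht]
  intro hcontra
  have h0 : φ (a * d - 1) = 0 := (key _).1 hcontra
  rw [map_sub, map_mul, map_one, hd0, mul_zero, zero_sub] at h0
  exact (neg_ne_zero.2 one_ne_zero) h0

lemma sum_all_mulunit (q : ℕ) [NeZero q] (hq : 2 ≤ q) (u : (ZMod q)ˣ) :
    ∑ x : ZMod q, E q (↑u * x) = 0 := by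
  have h : ∑ x : ZMod q, E q (↑u * x) = ∑ x : ZMod q, E q x :=
    Fintype.sum_equiv (Units.mulLeft u) _ _ (fun x => rfl)
  rw [h, sum_E_all q hq]

lemma sum_unitfilter_mulunit (q : ℕ) [NeZero q] (u : (ZMod q)ˣ) :
    ∑ x ∈ filter (fun x : ZMod q => IsUnit x) univ, E q (↑u * x)
      = ∑ x ∈ filter (fun x : ZMod q => IsUnit x) univ, E q x := by
  apply Finset.sum_nbij' (fun x : ZMod q => ↑u * x) (fun x : ZMod q => ↑u⁻¹ * x)
  · intro a ha
    simp only [mem_filter, mem_univ, true_and] at *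
    exact u.isUnit.mul ha
  · intro a ha
    simp only [mem_filter, mem_univ, true_and] at *
    exact u⁻¹.isUnit.mul ha
  · intro a _; rw [← mul_assoc, u.inv_mul, one_mul]
  · intro a _; rw [← mul_assoc, u.mul_inv, one_mul]
  · intro a _; rfl

lemma sum_units_mul_right (q : ℕ) [NeZero q] (w : (ZMod q)ˣ) (f : ZMod q → ℂ) :
    ∑ a : (ZMod q)ˣ, f ↑(a * w) = ∑ a : (ZMod q)ˣ, f ↑a :=
  Fintype.sum_equiv (Equiv.mulRight w) _ _ (fun a => rfl)

lemma Su_val (p t : ℕ) (hp : p.Prime) (ht : 1 ≤ t) [NeZero (p^t)] :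
    (∑ a : (ZMod (p^t))ˣ, E (p^t) ↑a) = if t = 1 then -1 else 0 := by
  have hq2 : 2 ≤ p^t := Nat.one_lt_pow (by omega) hp.one_lt
  rw [sum_units_coe]
  have hsplit := sum_filter_add_sum_filter_not (univ : Finset (ZMod (p^t)))
    (fun x => IsUnit x) (E (p^t))
  rw [sum_E_all _ hq2] at hsplit
  have hnon := sum_E_nonunit p t hp ht
  by_cases h1 : t = 1
  · subst h1
    have hpe : p^(1-1) = 1 := by norm_num
    rw [hpe, Finset.sum_range_one] at hnon
    norm_num at hnon
    rw [hnon] at hsplit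
    rw [if_pos rfl]
    linear_combination hsplit
  · have ht2 : 2 ≤ p^(t-1) := Nat.one_lt_pow (by omega) hp.one_lt
    rw [geom _ ht2] at hnon
    rw [hnon] at hsplit
    rw [if_neg h1]
    linear_combination hsplit

lemma cardSL (q : ℕ) [NeZero q] (hsh : ∀ d : ZMod q, ¬ IsUnit d → ∀ a : ZMod q, IsUnit (a * d - 1)) :
    Fintype.card (SL q) =
      (Fintype.card (ZMod q)ˣ) * q^2
        + (filter (fun x : ZMod q => ¬ IsUnit x) univ).card * (q * Fintype.card (ZMod q)ˣ) := by
  have hNval : ∀ d : ZMod q,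
      (filter (fun ω : SL q => (ω : Matrix (Fin 2) (Fin 2) (ZMod q)) 1 1 = d) univ).card
        = if IsUnit d then q^2 else q * Fintype.card (ZMod q)ˣ := by
    intro d
    rw [← Fintype.card_subtype, card_fiber_eq]
    by_cases hd : IsUnit d
    · obtain ⟨u, rfl⟩ := hd
      rw [if_pos u.isUnit, card_unit_fiber]
    · rw [if_neg hd, card_nonunit_fiber q d (hsh d hd)]
  rw [← Finset.card_univ,
    Finset.card_eq_sum_card_fiberwise
      (f := fun ω : SL q => (ω : Matrix (Fin 2) (Fin 2) (ZMod q)) 1 1)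
      (t := univ) (fun _ _ => mem_univ _)]
  rw [← sum_filter_add_sum_filter_not univ (fun d : ZMod q => IsUnit d)]
  congr 1
  · rw [Finset.sum_congr rfl (fun d hd => by
      rw [hNval d, if_pos (mem_filter.1 hd).2]), Finset.sum_const, smul_eq_mul,
      ← card_units_eq_filter]
  · rw [Finset.sum_congr rfl (fun d hd => by
      rw [hNval d, if_neg (mem_filter.1 hd).2]), Finset.sum_const, smul_eq_mul]

lemma UV_eq (q : ℕ) [NeZero q] :
    Fintype.card (ZMod q)ˣ + (filter (fun x : ZMod q => ¬ IsUnit x) univ).card = q := by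
  rw [card_units_eq_filter]
  rw [Finset.card_filter_add_card_filter_not]
  simp [ZMod.card]

lemma Tsum (p t : ℕ) (hp : p.Prime) (ht : 1 ≤ t) [NeZero (p^t)] (n : ℤ) :
    (∑ ω : SL (p^t), ramanujanSum (p^t)
        (((ω : Matrix (Fin 2) (Fin 2) (ZMod (p^t))) 1 1) - (n : ZMod (p^t))))
      = (((p^t : ℕ) : ℂ)^2 - ((p^t : ℕ) : ℂ) * (Fintype.card (ZMod (p^t))ˣ : ℂ))
        * (∑ a : (ZMod (p^t))ˣ, E (p^t) (↑a * (-(n : ZMod (p^t)))))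
        * (∑ a : (ZMod (p^t))ˣ, E (p^t) ↑a) := by
  have hq2 : 2 ≤ p^t := Nat.one_lt_pow (by omega) hp.one_lt
  set q := p^t with hqdef
  set m : ZMod q := -(n : ZMod q) with hm
  set F : ZMod q → ℂ := fun d => ∑ a : (ZMod q)ˣ, E q (↑a * (d + m)) with hF
  set Cn : ℂ := ∑ a : (ZMod q)ˣ, E q (↑a * m) with hCn
  set Su : ℂ := ∑ a : (ZMod q)ˣ, E q ↑a with hSu
  set U : ℕ := Fintype.card (ZMod q)ˣ with hU
  have hFd : ∀ d : ZMod q, F d = ∑ a : (ZMod q)ˣ, E q (↑a * d) * E q (↑a * m) := by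
    intro d
    refine Finset.sum_congr rfl fun a _ => ?_
    rw [show (↑a : ZMod q) * (d + m) = ↑a*d + ↑a*m by ring, E_add]
  have hFall : ∑ d : ZMod q, F d = 0 := by
    simp only [hFd]
    rw [Finset.sum_comm]
    refine Finset.sum_eq_zero fun a _ => ?_
    rw [← Finset.sum_mul, sum_all_mulunit q hq2 a, zero_mul]
  have hFunit : ∑ d ∈ filter (fun x : ZMod q => IsUnit x) univ, F d = Su * Cn := by
    simp only [hFd]
    rw [Finset.sum_comm]
    have key : ∀ a : (ZMod q)ˣ,
        ∑ d ∈ filter (fun x : ZMod q => IsUnit x) univ, E q (↑a*d) * E q (↑a*m)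
          = Su * E q (↑a * m) := by
      intro a
      rw [← Finset.sum_mul, sum_unitfilter_mulunit q a, hSu, sum_units_coe]
    rw [Finset.sum_congr rfl (fun a _ => key a), ← Finset.mul_sum]
  have hFnon : ∑ d ∈ filter (fun x : ZMod q => ¬ IsUnit x) univ, F d = - (Su * Cn) := by
    have h := sum_filter_add_sum_filter_not (univ : Finset (ZMod q)) (fun x => IsUnit x) F
    rw [hFall, hFunit] at h
    linear_combination h
  set N : ZMod q → ℕ := fun d =>
    (filter (fun ω : SL q => (ω : Matrix (Fin 2) (Fin 2) (ZMod q)) 1 1 = d) univ).card with hN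
  have hNval : ∀ d : ZMod q, N d = if IsUnit d then q^2 else q * U := by
    intro d
    show (filter (fun ω : SL q => (ω : Matrix (Fin 2) (Fin 2) (ZMod q)) 1 1 = d) univ).card
      = if IsUnit d then q^2 else q * U
    rw [← Fintype.card_subtype, card_fiber_eq]
    by_cases hd : IsUnit d
    · obtain ⟨u, rfl⟩ := hd
      rw [if_pos u.isUnit, card_unit_fiber]
    · rw [if_neg hd, card_nonunit_fiber q d (fun a => nonunit_shift p t hp ht d hd a)]
  have step1 : (∑ ω : SL q, ramanujanSum q
      (((ω : Matrix (Fin 2) (Fin 2) (ZMod q)) 1 1) - (n : ZMod q)))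
      = ∑ ω : SL q, F ((ω : Matrix (Fin 2) (Fin 2) (ZMod q)) 1 1) := by
    refine Finset.sum_congr rfl fun ω _ => ?_
    rw [ramanujanSum_eq, hF]
    simp only [sub_eq_add_neg, hm]
  have step2 : ∑ ω : SL q, F ((ω : Matrix (Fin 2) (Fin 2) (ZMod q)) 1 1)
      = ∑ d : ZMod q, (N d : ℂ) * F d := by
    rw [← Finset.sum_fiberwise univ
      (fun ω : SL q => (ω : Matrix (Fin 2) (Fin 2) (ZMod q)) 1 1)
      (fun ω => F ((ω : Matrix (Fin 2) (Fin 2) (ZMod q)) 1 1))]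
    refine Finset.sum_congr rfl fun d _ => ?_
    calc ∑ ω ∈ filter (fun ω : SL q => (ω : Matrix (Fin 2) (Fin 2) (ZMod q)) 1 1 = d) univ,
            F ((ω : Matrix (Fin 2) (Fin 2) (ZMod q)) 1 1)
        = ∑ _ω ∈ filter (fun ω : SL q => (ω : Matrix (Fin 2) (Fin 2) (ZMod q)) 1 1 = d) univ,
            F d := Finset.sum_congr rfl (fun ω hω => by rw [(mem_filter.1 hω).2])
      _ = (N d : ℂ) * F d := by rw [Finset.sum_const, nsmul_eq_mul]
  have hA : ∑ d ∈ filter (fun x : ZMod q => IsUnit x) univ, (N d : ℂ) * F d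
      = ((q:ℂ)^2) * (Su * Cn) := by
    rw [← hFunit, Finset.mul_sum]
    refine Finset.sum_congr rfl fun d hd => ?_
    rw [hNval d, if_pos (mem_filter.1 hd).2]
    push_cast
    ring
  have hB : ∑ d ∈ filter (fun x : ZMod q => ¬ IsUnit x) univ, (N d : ℂ) * F d
      = ((q:ℂ) * (U:ℂ)) * (- (Su * Cn)) := by
    rw [← hFnon, Finset.mul_sum]
    refine Finset.sum_congr rfl fun d hd => ?_
    rw [hNval d, if_neg (mem_filter.1 hd).2]
    push_cast
    ring
  calc (∑ ω : SL q, ramanujanSum q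
      (((ω : Matrix (Fin 2) (Fin 2) (ZMod q)) 1 1) - (n : ZMod q)))
      = ∑ d : ZMod q, (N d : ℂ) * F d := by rw [step1, step2]
    _ = ((q:ℂ)^2) * (Su * Cn) + ((q:ℂ) * (U:ℂ)) * (- (Su * Cn)) := by
        rw [← sum_filter_add_sum_filter_not (univ : Finset (ZMod q))
          (fun x => IsUnit x) (fun d => (N d : ℂ) * F d), hA, hB]
    _ = ((q:ℂ)^2 - (q:ℂ) * (U:ℂ)) * Cn * Su := by ring

end RamanujanAux

open RamanujanAux in
/-- Evaluation of the averaged Ramanujan sum over `SL₂(ℤ/p^tℤ)`. -/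
theorem ramanujanAvg_eval (p t : ℕ) (hp : p.Prime) (ht : 1 ≤ t) (n : ℤ) :
    (t = 1 → (p : ℤ) ∣ n → ramanujanAvg (p ^ t) n = -1 / ((p : ℂ) + 1)) ∧
    (t = 1 → ¬ (p : ℤ) ∣ n → ramanujanAvg (p ^ t) n = 1 / ((p : ℂ) ^ 2 - 1)) ∧
    (2 ≤ t → ramanujanAvg (p ^ t) n = 0) := by
  haveI : NeZero (p^t) := ⟨pow_ne_zero t hp.pos.ne'⟩
  have hp2 := hp.two_le
  have havg : ramanujanAvg (p^t) n
      = (Nat.card (SL (p^t)) : ℂ)⁻¹ *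
          ∑ ω : SL (p^t), ramanujanSum (p^t)
            (((ω : Matrix (Fin 2) (Fin 2) (ZMod (p^t))) 1 1) - (n : ZMod (p^t))) := by
    rw [ramanujanAvg, finsum_eq_sum_of_fintype]
  have hpne : (p:ℂ) ≠ 0 := Nat.cast_ne_zero.2 (by omega)
  have hp1 : (p:ℂ) - 1 ≠ 0 := by
    intro h
    have h' : (p:ℂ) = 1 := by linear_combination h
    have : p = 1 := by exact_mod_cast h'
    omega
  have hp1' : (p:ℂ) + 1 ≠ 0 := by
    intro h
    have h' : ((p+1:ℕ):ℂ) = 0 := by push_cast; linear_combination h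
    have : p + 1 = 0 := by exact_mod_cast h'
    omega
  have hcast : ((p-1:ℕ):ℂ) = (p:ℂ) - 1 := by
    rw [Nat.cast_sub hp.one_le, Nat.cast_one]
  refine ⟨?_, ?_, ?_⟩
  · intro ht1 hdvd
    subst ht1
    haveI : NeZero (p^1) := ⟨pow_ne_zero 1 hp.pos.ne'⟩
    have hU : Fintype.card (ZMod (p^1))ˣ = p - 1 := by
      rw [ZMod.card_units_eq_totient, Nat.totient_prime_pow hp one_pos]
      norm_num
    have hn0 : (n : ZMod (p^1)) = 0 := by
      rw [ZMod.intCast_zmod_eq_zero_iff_dvd]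
      have he : ((p^1:ℕ):ℤ) = (p:ℤ) := by push_cast; ring
      rw [he]; exact hdvd
    have hCn : (∑ a : (ZMod (p^1))ˣ, E (p^1) ((a : ZMod (p^1)) * (-(n : ZMod (p^1))))) = ((p-1 : ℕ) : ℂ) := by
      rw [hn0]
      simp only [neg_zero, mul_zero, E_zero]
      rw [Finset.sum_const, Finset.card_univ, hU, nsmul_eq_mul, mul_one]
    have hSu := Su_val p 1 hp le_rfl
    rw [if_pos rfl] at hSu
    have h2 := UV_eq (p^1)
    rw [hU] at h2
    have hV : (Finset.filter (fun x : ZMod (p^1) => ¬ IsUnit x) Finset.univ).card = 1 := by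
      have hpow : p^1 = p := pow_one p
      omega
    have hcard : Fintype.card (SL (p^1)) = (p-1) * (p^1)^2 + 1 * (p^1 * (p-1)) := by
      have h1 := cardSL (p^1) (fun d hd a => nonunit_shift p 1 hp le_rfl d hd a)
      rw [hU, hV] at h1
      exact h1
    rw [havg, Tsum p 1 hp le_rfl n, hU, hCn, hSu, Nat.card_eq_fintype_card, hcard]
    push_cast [hcast]
    rw [pow_one]
    have hd0 : ((p:ℂ)-1)*(p:ℂ)^2 + 1*((p:ℂ)*((p:ℂ)-1)) ≠ 0 := by
      have he : ((p:ℂ)-1)*(p:ℂ)^2 + 1*((p:ℂ)*((p:ℂ)-1)) = (p:ℂ)*(((p:ℂ)-1)*((p:ℂ)+1)) := by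
        ring
      rw [he]
      exact mul_ne_zero hpne (mul_ne_zero hp1 hp1')
    rw [inv_mul_eq_div, div_eq_div_iff hd0 hp1']
    ring
  · intro ht1 hnd
    subst ht1
    haveI : NeZero (p^1) := ⟨pow_ne_zero 1 hp.pos.ne'⟩
    have hU : Fintype.card (ZMod (p^1))ˣ = p - 1 := by
      rw [ZMod.card_units_eq_totient, Nat.totient_prime_pow hp one_pos]
      norm_num
    have hn0 : (n : ZMod (p^1)) ≠ 0 := by
      intro h
      rw [ZMod.intCast_zmod_eq_zero_iff_dvd] at h
      have he : ((p^1:ℕ):ℤ) = (p:ℤ) := by push_cast; ring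
      rw [he] at h
      exact hnd h
    have hmu : IsUnit (-(n : ZMod (p^1))) := by
      rw [unit_iff p 1 hp le_rfl]
      intro hdvd
      have hlt : (-(n : ZMod (p^1))).val < p^1 := ZMod.val_lt _
      have hv0 : (-(n : ZMod (p^1))).val = 0 := by
        rcases Nat.eq_zero_or_pos (-(n : ZMod (p^1))).val with h|h
        · exact h
        · exact absurd (Nat.le_of_dvd h hdvd)
            (by have hp1eq : p^1 = p := pow_one p; omega)
      have := (ZMod.val_eq_zero _).1 hv0
      rw [neg_eq_zero] at this
      exact hn0 this
    obtain ⟨w, hw⟩ := hmu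
    have hCn : (∑ a : (ZMod (p^1))ˣ, E (p^1) ((a : ZMod (p^1)) * (-(n : ZMod (p^1)))))
        = ∑ a : (ZMod (p^1))ˣ, E (p^1) ↑a := by
      refine Eq.trans ?_ (sum_units_mul_right (p^1) w (fun x => E (p^1) x))
      refine Finset.sum_congr rfl fun a _ => ?_
      rw [Units.val_mul, hw]
    have hSu := Su_val p 1 hp le_rfl
    rw [if_pos rfl] at hSu
    have h2 := UV_eq (p^1)
    rw [hU] at h2
    have hV : (Finset.filter (fun x : ZMod (p^1) => ¬ IsUnit x) Finset.univ).card = 1 := by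
      have hpow : p^1 = p := pow_one p
      omega
    have hcard : Fintype.card (SL (p^1)) = (p-1) * (p^1)^2 + 1 * (p^1 * (p-1)) := by
      have h1 := cardSL (p^1) (fun d hd a => nonunit_shift p 1 hp le_rfl d hd a)
      rw [hU, hV] at h1
      exact h1
    rw [havg, Tsum p 1 hp le_rfl n, hU, hCn, hSu, Nat.card_eq_fintype_card, hcard]
    push_cast [hcast]
    rw [pow_one]
    have hd0 : ((p:ℂ)-1)*(p:ℂ)^2 + 1*((p:ℂ)*((p:ℂ)-1)) ≠ 0 := by
      have he : ((p:ℂ)-1)*(p:ℂ)^2 + 1*((p:ℂ)*((p:ℂ)-1)) = (p:ℂ)*(((p:ℂ)-1)*((p:ℂ)+1)) := by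
        ring
      rw [he]
      exact mul_ne_zero hpne (mul_ne_zero hp1 hp1')
    have hsq : (p:ℂ)^2 - 1 ≠ 0 := by
      have he : (p:ℂ)^2 - 1 = ((p:ℂ)-1)*((p:ℂ)+1) := by ring
      rw [he]
      exact mul_ne_zero hp1 hp1'
    rw [inv_mul_eq_div, div_eq_div_iff hd0 hsq]
    ring
  · intro ht2
    rw [havg, Tsum p t hp ht n, Su_val p t hp ht, if_neg (by omega), mul_zero, mul_zero]
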